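/- Let n ≥ 1 be an integer and W : {1,…,n} × {1,…,n} → K a function. For each i ∈ {1,…,n} set d⁺(i) = ∑_{j=1}^{n} W(i,j). Let L be the (n−1)×(n−1) matrix with (i,j)-entry δ_{i,j}·d⁺(i) − W(i,j). Then det L = ∑_{f : {1,…,n} → {1,…,n}, f(n)=n, f n-potent} ∏_{i=1}^{n−1} W(i, f(i)). -/

import Mathlib

open scoped Classical

namespace MTTaux

def ext {m : ℕ} (f : Fin m → Fin (m + 1)) : Fin (m + 1) → Fin (m + 1) :=
  fun i => Fin.lastCases (Fin.last m) f i

@[simp] lemma ext_castSucc {m : ℕ} (f : Fin m → Fin (m + 1)) (i : Fin m) :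
    ext f i.castSucc = f i := Fin.lastCases_castSucc i

@[simp] lemma ext_last {m : ℕ} (f : Fin m → Fin (m + 1)) :
    ext f (Fin.last m) = Fin.last m := Fin.lastCases_last

def Mf {m : ℕ} (K : Type*) [CommRing K] (f : Fin m → Fin (m + 1)) :
    Matrix (Fin m) (Fin m) K :=
  Matrix.of fun i j => (if i = j then (1 : K) else 0) - (if f i = j.castSucc then 1 else 0)

def Good {m : ℕ} (f : Fin m → Fin (m + 1)) : Prop :=
  ∀ i : Fin m, ∃ k : ℕ, (ext f)^[k] i.castSucc = Fin.last m

lemma det_Mf_of_good {K : Type*} [CommRing K] {m : ℕ} (f : Fin m → Fin (m + 1))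
    (h : Good f) : (Mf K f).det = 1 := by
  classical
  -- the "distance to the root" function
  set r : Fin m → ℕ := fun i => Nat.find (h i) with hrdef
  have key : ∀ i j : Fin m, f i = j.castSucc → r j < r i := by
    intro i j hij
    have hspec : (ext f)^[r i] i.castSucc = Fin.last m := Nat.find_spec (h i)
    have hne : r i ≠ 0 := by
      intro h0
      rw [h0, Function.iterate_zero_apply] at hspec
      exact (Fin.castSucc_lt_last i).ne hspec
    obtain ⟨k, hk⟩ := Nat.exists_eq_succ_of_ne_zero hne
    have hjk : (ext f)^[k] j.castSucc = Fin.last m := by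
      rw [hk, Function.iterate_succ_apply, ext_castSucc, hij] at hspec
      exact hspec
    have hle : r j ≤ k := Nat.find_le hjk
    omega
  have noFix : ∀ i : Fin m, f i ≠ i.castSucc := fun i hfi => lt_irrefl _ (key i i hfi)
  rw [Matrix.det_apply']
  rw [Finset.sum_eq_single (1 : Equiv.Perm (Fin m))]
  · have : ∀ i : Fin m, (Mf K f) ((1 : Equiv.Perm (Fin m)) i) i = 1 := by
      intro i
      simp [Mf, noFix i]
    rw [Finset.prod_congr rfl fun i _ => this i]
    simp
  · intro σ _ hσ
    have hS : (Finset.univ.filter fun i : Fin m => σ i ≠ i).Nonempty := by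
      by_contra hemp
      rw [Finset.not_nonempty_iff_eq_empty, Finset.filter_eq_empty_iff] at hemp
      exact hσ (Equiv.ext fun i => not_not.mp (hemp (Finset.mem_univ i)))
    obtain ⟨i, hi, hfi⟩ : ∃ i : Fin m, σ i ≠ i ∧ f (σ i) ≠ i.castSucc := by
      by_contra hcon
      push_neg at hcon
      obtain ⟨i₀, hi₀mem, hi₀min⟩ := Finset.exists_min_image _ r hS
      have hi₀ : σ i₀ ≠ i₀ := (Finset.mem_filter.mp hi₀mem).2
      have hj : σ (σ⁻¹ i₀) ≠ σ⁻¹ i₀ := by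
        rw [show σ (σ⁻¹ i₀) = i₀ from σ.apply_symm_apply i₀]
        intro hji
        apply hi₀
        rw [hji, show σ (σ⁻¹ i₀) = i₀ from σ.apply_symm_apply i₀]
        exact hji
      have h1 : r i₀ ≤ r (σ⁻¹ i₀) :=
        hi₀min _ (Finset.mem_filter.mpr ⟨Finset.mem_univ _, hj⟩)
      have h2 : r (σ⁻¹ i₀) < r (σ (σ⁻¹ i₀)) := key _ _ (hcon _ hj)
      rw [show σ (σ⁻¹ i₀) = i₀ from σ.apply_symm_apply i₀] at h2
      omega
    refine mul_eq_zero_of_right _ (Finset.prod_eq_zero (Finset.mem_univ i) ?_)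
    simp [Mf, hi, hfi]
  · intro h1; exact absurd (Finset.mem_univ _) h1

lemma det_Mf_of_bad {K : Type*} [CommRing K] {m : ℕ} (f : Fin m → Fin (m + 1))
    (h : ¬ Good f) : (Mf K f).det = 0 := by
  classical
  rw [Good] at h
  push_neg at h
  obtain ⟨i₀, hi₀⟩ := h
  set g : Fin (m + 1) → Fin (m + 1) := ext f with hgdef
  obtain ⟨a, b, hab, heq⟩ : ∃ a b : ℕ, a < b ∧ g^[a] i₀.castSucc = g^[b] i₀.castSucc := by
    obtain ⟨a, b, hne, heq⟩ := Fintype.exists_ne_map_eq_of_card_lt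
      (fun k : Fin (m + 2) => g^[(k : ℕ)] i₀.castSucc) (by simp)
    rcases lt_or_gt_of_ne hne with hlt | hlt
    · exact ⟨a, b, hlt, heq⟩
    · exact ⟨b, a, hlt, heq.symm⟩
  set y : Fin (m + 1) := g^[a] i₀.castSucc with hydef
  set p : ℕ := b - a with hpdef
  have hp : 0 < p := by omega
  have hyp : g^[p] y = y := by
    rw [hydef, ← Function.iterate_add_apply]
    have : p + a = b := by omega
    rw [this, ← heq]
  have hynl : ∀ k, g^[k] y ≠ Fin.last m := by
    intro k
    rw [hydef, ← Function.iterate_add_apply]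
    exact hi₀ (k + a)
  have hcyc : ∀ k, g^[k] y = g^[k % p] y := by
    intro k
    conv_lhs => rw [← Nat.mod_add_div k p]
    rw [Function.iterate_add_apply, Function.iterate_mul,
      Function.iterate_fixed hyp (k / p)]
  set O : Finset (Fin (m + 1)) := (Finset.range p).image (fun k => g^[k] y) with hOdef
  have memO : ∀ k, g^[k] y ∈ O := by
    intro k
    rw [hcyc k]
    exact Finset.mem_image.mpr ⟨k % p, Finset.mem_range.mpr (Nat.mod_lt _ hp), rfl⟩
  have keyit : ∀ a' : ℕ, g^[p - 1] (g^[a' + 1] y) = g^[a'] y := by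
    intro a'
    rw [← Function.iterate_add_apply]
    have : p - 1 + (a' + 1) = a' + p := by omega
    rw [this, Function.iterate_add_apply, hyp]
  have hinj : ∀ a' b' : ℕ, g (g^[a'] y) = g (g^[b'] y) → g^[a'] y = g^[b'] y := by
    intro a' b' he
    rw [← Function.iterate_succ_apply' g a', ← Function.iterate_succ_apply' g b'] at he
    rw [← keyit a', ← keyit b', he]
  set c : Fin m → K := fun j => if j.castSucc ∈ O then 1 else 0 with hcdef
  obtain ⟨y₀, hy₀⟩ : ∃ y₀ : Fin m, y₀.castSucc = y :=
    Fin.exists_castSucc_eq.mpr (by simpa using hynl 0)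
  have hcy₀ : c y₀ = 1 := by
    rw [hcdef]
    simp only [hy₀]
    rw [if_pos (by simpa using memO 0)]
  -- the linear combination of the rows with coefficients `c` vanishes
  have hrow : ∑ j, c j • (Mf K f) j = 0 := by
    funext k
    rw [Finset.sum_apply]
    simp only [Pi.smul_apply, smul_eq_mul, Pi.zero_apply]
    have entry : ∀ j : Fin m, (Mf K f) j k
        = (if j = k then (1 : K) else 0) - (if f j = k.castSucc then 1 else 0) := fun j => rfl
    have split : ∑ j, c j * (Mf K f) j k
        = (∑ j, c j * (if j = k then (1 : K) else 0))
          - ∑ j, c j * (if f j = k.castSucc then (1 : K) else 0) := by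
      rw [← Finset.sum_sub_distrib]
      exact Finset.sum_congr rfl fun j _ => by rw [entry j, mul_sub]
    rw [split]
    have h1 : ∑ j, c j * (if j = k then (1 : K) else 0) = c k := by
      simp [mul_ite]
    have h2 : ∑ j, c j * (if f j = k.castSucc then (1 : K) else 0) = c k := by
      by_cases hk : k.castSucc ∈ O
      · obtain ⟨t, ht, hgt⟩ := Finset.mem_image.mp hk
        -- the unique preimage of `k.castSucc` inside the cycle
        have hwO : g^[t + p - 1] y ∈ O := memO _
        obtain ⟨j₁, hj₁⟩ : ∃ j₁ : Fin m, j₁.castSucc = g^[t + p - 1] y :=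
          Fin.exists_castSucc_eq.mpr (hynl _)
        have eR : g (g^[t + p - 1] y) = k.castSucc := by
          rw [← Function.iterate_succ_apply' g (t + p - 1) y]
          have ht1 : (t + p - 1).succ = t + p := by omega
          rw [ht1, Function.iterate_add_apply, hyp, hgt]
        have hfj₁ : f j₁ = k.castSucc := by
          have h' : g (j₁.castSucc) = f j₁ := ext_castSucc f j₁
          rw [← h', hj₁]
          exact eR
        have hck : c k = 1 := by rw [hcdef]; simp only []; rw [if_pos hk]
        rw [hck]
        have hpt : ∀ j : Fin m, c j * (if f j = k.castSucc then (1 : K) else 0)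
            = if j = j₁ then 1 else 0 := by
          intro j
          by_cases hjj : j = j₁
          · subst hjj
            rw [if_pos rfl, hcdef]
            simp only []
            rw [if_pos (hj₁ ▸ hwO), if_pos hfj₁, one_mul]
          · rw [if_neg hjj, hcdef]
            simp only []
            by_cases hjO : j.castSucc ∈ O
            · by_cases hfj : f j = k.castSucc
              · exfalso
                obtain ⟨s, hs, hgs⟩ := Finset.mem_image.mp hjO
                have eL : g (g^[s] y) = k.castSucc := by
                  rw [hgs]
                  exact (ext_castSucc f j).trans hfj
                have e1 : g (g^[s] y) = g (g^[t + p - 1] y) := eL.trans eR.symm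
                have e2 := hinj s (t + p - 1) e1
                rw [hgs, ← hj₁] at e2
                exact hjj (Fin.castSucc_injective m e2)
              · rw [if_neg hfj, mul_zero]
            · rw [if_neg hjO, zero_mul]
        rw [Finset.sum_congr rfl fun j _ => hpt j]
        simp
      · have hck : c k = 0 := by rw [hcdef]; simp only []; rw [if_neg hk]
        rw [hck]
        refine Finset.sum_eq_zero fun j _ => ?_
        rw [hcdef]
        simp only []
        by_cases hjO : j.castSucc ∈ O
        · by_cases hfj : f j = k.castSucc
          · exfalso
            obtain ⟨s, hs, hgs⟩ := Finset.mem_image.mp hjO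
            apply hk
            rw [← hfj, ← ext_castSucc f j, ← hgs]
            show g (g^[s] y) ∈ O
            rw [← Function.iterate_succ_apply' g s y]
            exact memO (s + 1)
          · rw [if_neg hfj, mul_zero]
        · rw [if_neg hjO, zero_mul]
    rw [h1, h2, sub_self]
  have h0 : ((Mf K f).updateRow y₀ (∑ j, c j • (Mf K f) j)).det = c y₀ • (Mf K f).det :=
    Matrix.det_updateRow_sum _ _ _
  rw [hrow, hcy₀, one_smul] at h0
  rw [← h0]
  exact Matrix.det_eq_zero_of_row_eq_zero y₀ fun j => by simp

lemma ext_comp {m : ℕ} (g : Fin (m + 1) → Fin (m + 1)) (hg : g (Fin.last m) = Fin.last m) :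
    ext (fun i : Fin m => g i.castSucc) = g := by
  funext i
  induction i using Fin.lastCases with
  | last => rw [ext_last, hg]
  | cast i => rw [ext_castSucc]

end MTTaux

theorem matrix_tree_theorem {K : Type*} [CommRing K] (m : ℕ)
    (W : Fin (m + 1) → Fin (m + 1) → K) :
    Matrix.det (Matrix.of fun i j : Fin m =>
      (if i = j then (1 : K) else 0) * (∑ k, W i.castSucc k) - W i.castSucc j.castSucc) =
    ∑ f ∈ Finset.univ.filter (fun f : Fin (m + 1) → Fin (m + 1) =>
        f (Fin.last m) = Fin.last m ∧ ∀ i, ∃ k : ℕ, f^[k] i = Fin.last m),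
      ∏ i : Fin m, W i.castSucc (f i.castSucc) := by
  classical
  set v : Fin m → Fin (m + 1) → (Fin m → K) :=
    fun i k => fun j => (if i = j then (1 : K) else 0) - (if k = j.castSucc then 1 else 0)
    with hv
  have hL : (Matrix.of fun i j : Fin m =>
      (if i = j then (1 : K) else 0) * (∑ k, W i.castSucc k) - W i.castSucc j.castSucc)
      = fun i => ∑ k : Fin (m + 1), W i.castSucc k • v i k := by
    funext i j
    show (if i = j then (1 : K) else 0) * (∑ k, W i.castSucc k) - W i.castSucc j.castSucc
      = (∑ k : Fin (m + 1), W i.castSucc k • v i k) j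
    rw [Finset.sum_apply]
    simp only [Pi.smul_apply, smul_eq_mul, hv]
    rw [Finset.sum_congr rfl (fun k _ => mul_sub (W i.castSucc k) _ _),
      Finset.sum_sub_distrib]
    congr 1
    · rw [← Finset.sum_mul, mul_comm]
    · simp [mul_ite]
  rw [hL]
  have step : Matrix.det
        ((fun i => ∑ k : Fin (m + 1), W i.castSucc k • v i k) : Matrix (Fin m) (Fin m) K)
      = ∑ r : Fin m → Fin (m + 1),
          (∏ i : Fin m, W i.castSucc (r i)) • Matrix.det (MTTaux.Mf K r) := by
    have h1 : Matrix.det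
          ((fun i => ∑ k : Fin (m + 1), W i.castSucc k • v i k) : Matrix (Fin m) (Fin m) K)
        = (Matrix.detRowAlternating (R := K) (n := Fin m)).toMultilinearMap
            (fun i => ∑ k : Fin (m + 1), W i.castSucc k • v i k) := rfl
    rw [h1, MultilinearMap.map_sum]
    refine Finset.sum_congr rfl fun r _ => ?_
    rw [MultilinearMap.map_smul_univ]
    rfl
  rw [step]
  have split : ∀ r : Fin m → Fin (m + 1),
      (∏ i : Fin m, W i.castSucc (r i)) • Matrix.det (MTTaux.Mf K r)
      = if MTTaux.Good r then ∏ i : Fin m, W i.castSucc (r i) else 0 := by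
    intro r
    by_cases hg : MTTaux.Good r
    · rw [if_pos hg, MTTaux.det_Mf_of_good r hg, smul_eq_mul, mul_one]
    · rw [if_neg hg, MTTaux.det_Mf_of_bad r hg, smul_eq_mul, mul_zero]
  rw [Finset.sum_congr rfl fun r _ => split r, ← Finset.sum_filter]
  refine Finset.sum_nbij' (fun r => MTTaux.ext r) (fun g => fun i : Fin m => g i.castSucc)
    ?_ ?_ ?_ ?_ ?_
  · intro r hr
    have hgood : MTTaux.Good r := (Finset.mem_filter.mp hr).2
    refine Finset.mem_filter.mpr ⟨Finset.mem_univ _, MTTaux.ext_last r, ?_⟩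
    intro i
    induction i using Fin.lastCases with
    | last => exact ⟨0, rfl⟩
    | cast i => exact hgood i
  · intro g hg
    obtain ⟨-, hg1, hg2⟩ := Finset.mem_filter.mp hg
    refine Finset.mem_filter.mpr ⟨Finset.mem_univ _, ?_⟩
    intro i
    show ∃ k : ℕ, (MTTaux.ext (fun i : Fin m => g i.castSucc))^[k] i.castSucc = Fin.last m
    rw [MTTaux.ext_comp g hg1]
    exact hg2 i.castSucc
  · intro r _
    funext i
    exact MTTaux.ext_castSucc r i
  · intro g hg
    show MTTaux.ext (fun i : Fin m => g i.castSucc) = g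
    exact MTTaux.ext_comp g (Finset.mem_filter.mp hg).2.1
  · intro r _
    exact Finset.prod_congr rfl fun i _ =>
      congrArg (W i.castSucc) (MTTaux.ext_castSucc r i).symm
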